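/- Let μ be a Borel probability measure on E with compact support, and let u be its heat evolution. Then for every x ∈ E and every t > 0, u(x,t) > 0, the function x ↦ log u(x,t) is differentiable at x, and its gradient equals (m(x,t) − x)/(2t), where m is the tilted barycenter of μ. -/

import Mathlib

open MeasureTheory Metric Filter Topology

/-- The heat kernel `G_t(z) = (4πt)^{-d/2} exp(-‖z‖²/(4t))` on `EuclideanSpace ℝ (Fin d)`. -/
noncomputable def heatKernel (d : ℕ) (t : ℝ) (z : EuclideanSpace ℝ (Fin d)) : ℝ :=
  (4 * Real.pi * t) ^ (-(d : ℝ) / 2) * Real.exp (-‖z‖ ^ 2 / (4 * t))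

/-- The heat evolution `u(x,t) = ∫ G_t(x - y) dμ(y)` of a measure `μ`. -/
noncomputable def heatEvolution {d : ℕ} (μ : Measure (EuclideanSpace ℝ (Fin d)))
    (x : EuclideanSpace ℝ (Fin d)) (t : ℝ) : ℝ :=
  ∫ y, heatKernel d t (x - y) ∂μ

/-- The (topological) support of a Borel measure: points all of whose neighborhoods
have positive measure. -/
def msupport {E : Type*} [TopologicalSpace E] [MeasurableSpace E] (μ : Measure E) : Set E :=
  {x | ∀ U ∈ nhds x, 0 < μ U}

/-- The tilted barycenter `m(x,t) = (∫ y G_t(x-y) dμ(y)) / u(x,t)`. -/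
noncomputable def tiltedBarycenter {d : ℕ} (μ : Measure (EuclideanSpace ℝ (Fin d)))
    (x : EuclideanSpace ℝ (Fin d)) (t : ℝ) : EuclideanSpace ℝ (Fin d) :=
  (heatEvolution μ x t)⁻¹ • ∫ y, heatKernel d t (x - y) • y ∂μ

section Aux

variable {d : ℕ} {t : ℝ}

lemma heatKernel_pos (ht : 0 < t) (z : EuclideanSpace ℝ (Fin d)) : 0 < heatKernel d t z := by
  have h4 : (0:ℝ) < 4 * Real.pi * t := by
    have := Real.pi_pos; positivity
  exact mul_pos (Real.rpow_pos_of_pos h4 _) (Real.exp_pos _)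

lemma heatKernel_le (ht : 0 < t) (z : EuclideanSpace ℝ (Fin d)) :
    heatKernel d t z ≤ (4 * Real.pi * t) ^ (-(d : ℝ) / 2) := by
  have h4 : (0:ℝ) < 4 * Real.pi * t := by
    have := Real.pi_pos; positivity
  have hexp : Real.exp (-‖z‖ ^ 2 / (4 * t)) ≤ 1 := by
    apply Real.exp_le_one_iff.2
    rw [neg_div]
    exact neg_nonpos.2 (div_nonneg (by positivity) (by positivity))
  exact mul_le_of_le_one_right (Real.rpow_pos_of_pos h4 _).le hexp

lemma heatKernel_mul_norm_le (ht : 0 < t) (z : EuclideanSpace ℝ (Fin d)) :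
    heatKernel d t z * ‖z‖ ≤ (4 * Real.pi * t) ^ (-(d : ℝ) / 2) * max 1 (4 * t) := by
  set c : ℝ := (4 * Real.pi * t) ^ (-(d : ℝ) / 2) with hc
  have hcpos : 0 < c := by
    have := Real.pi_pos
    exact Real.rpow_pos_of_pos (by positivity) _
  rcases le_total ‖z‖ 1 with hz | hz
  · calc heatKernel d t z * ‖z‖ ≤ c * 1 :=
          mul_le_mul (heatKernel_le ht z) hz (norm_nonneg _) hcpos.le
      _ ≤ c * max 1 (4 * t) := by
          exact mul_le_mul_of_nonneg_left (le_max_left _ _) hcpos.le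
  · have hz0 : (0:ℝ) < ‖z‖ := lt_of_lt_of_le one_pos hz
    have hspos : 0 < ‖z‖ ^ 2 / (4 * t) := by positivity
    have hexp : Real.exp (-‖z‖ ^ 2 / (4 * t)) ≤ (‖z‖ ^ 2 / (4 * t))⁻¹ := by
      have h1 : ‖z‖ ^ 2 / (4 * t) ≤ Real.exp (‖z‖ ^ 2 / (4 * t)) := by
        linarith [Real.add_one_le_exp (‖z‖ ^ 2 / (4 * t))]
      rw [neg_div, Real.exp_neg]
      exact inv_anti₀ hspos h1
    have hinv : (‖z‖ ^ 2 / (4 * t))⁻¹ = 4 * t / ‖z‖ ^ 2 := by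
      rw [inv_div]
    have hexp' : Real.exp (-‖z‖ ^ 2 / (4 * t)) * ‖z‖ ≤ 4 * t := by
      have h2 : Real.exp (-‖z‖ ^ 2 / (4 * t)) * ‖z‖ ≤ 4 * t / ‖z‖ ^ 2 * ‖z‖ := by
        apply mul_le_mul_of_nonneg_right _ (norm_nonneg z)
        rw [← hinv]; exact hexp
      have h3 : 4 * t / ‖z‖ ^ 2 * ‖z‖ = 4 * t / ‖z‖ := by
        field_simp
      have h4 : 4 * t / ‖z‖ ≤ 4 * t := div_le_self (by positivity) hz
      linarith
    have : heatKernel d t z * ‖z‖ = c * (Real.exp (-‖z‖ ^ 2 / (4 * t)) * ‖z‖) := by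
      rw [heatKernel]; ring
    rw [this]
    calc c * (Real.exp (-‖z‖ ^ 2 / (4 * t)) * ‖z‖) ≤ c * (4 * t) :=
          mul_le_mul_of_nonneg_left hexp' hcpos.le
      _ ≤ c * max 1 (4 * t) := mul_le_mul_of_nonneg_left (le_max_right _ _) hcpos.le

lemma heatKernel_continuous (ht : 0 < t) : Continuous (heatKernel d t) := by
  unfold heatKernel
  fun_prop

/-- Derivative of `x ↦ G_t(x - y)`. -/
lemma heatKernel_hasFDerivAt (ht : 0 < t) (y x : EuclideanSpace ℝ (Fin d)) :
    HasFDerivAt (fun v => heatKernel d t (v - y))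
      ((-((2 * t)⁻¹ * heatKernel d t (x - y))) • innerSL ℝ (x - y)) x := by
  set c : ℝ := (4 * Real.pi * t) ^ (-(d : ℝ) / 2) with hc
  have h1 : HasFDerivAt (fun v : EuclideanSpace ℝ (Fin d) => v - y) (ContinuousLinearMap.id ℝ (EuclideanSpace ℝ (Fin d))) x :=
    (hasFDerivAt_id x).sub_const y
  have hsq : HasFDerivAt (fun v : EuclideanSpace ℝ (Fin d) => ‖v - y‖ ^ 2) ((2:ℝ) • innerSL ℝ (x - y)) x := by
    have h2 := h1.inner ℝ h1
    simp only [real_inner_self_eq_norm_sq] at h2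
    refine h2.congr_fderiv ?_
    ext w
    simp only [ContinuousLinearMap.smul_apply, innerSL_apply_apply, ContinuousLinearMap.coe_comp',
      Function.comp_apply, fderivInnerCLM_apply, ContinuousLinearMap.prod_apply,
      ContinuousLinearMap.coe_id', id_eq, smul_eq_mul]
    rw [real_inner_comm w (x - y)]
    ring
  have h3 : HasDerivAt (fun s : ℝ => c * Real.exp (-s / (4 * t)))
      (c * (Real.exp (-‖x - y‖ ^ 2 / (4 * t)) * (-1 / (4 * t)))) (‖x - y‖ ^ 2) := by
    have h4 : HasDerivAt (fun s : ℝ => -s / (4 * t)) (-1 / (4 * t)) (‖x - y‖ ^ 2) := by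
      simpa using ((hasDerivAt_id (‖x - y‖ ^ 2)).neg.div_const (4 * t))
    exact (h4.exp.const_mul c)
  have h5 := h3.comp_hasFDerivAt x hsq
  have hfun : ((fun s : ℝ => c * Real.exp (-s / (4 * t))) ∘ fun v : EuclideanSpace ℝ (Fin d) => ‖v - y‖ ^ 2)
      = fun v => heatKernel d t (v - y) := rfl
  rw [hfun] at h5
  refine h5.congr_fderiv ?_
  rw [smul_smul]
  congr 1
  have htne : t ≠ 0 := ht.ne'
  rw [heatKernel, ← hc]
  field_simp
  ring

end Aux

set_option maxHeartbeats 1000000 in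
set_option synthInstance.maxHeartbeats 400000 in
theorem gaussian_mean_shift
    (d : ℕ) (hd : 1 ≤ d)
    (μ : Measure (EuclideanSpace ℝ (Fin d))) [IsProbabilityMeasure μ]
    (hcpt : IsCompact (msupport μ))
    (x : EuclideanSpace ℝ (Fin d)) (t : ℝ) (ht : 0 < t) :
    0 < heatEvolution μ x t ∧
      HasGradientAt (fun x' => Real.log (heatEvolution μ x' t))
        ((2 * t)⁻¹ • (tiltedBarycenter μ x t - x)) x := by
  classical
  set c : ℝ := (4 * Real.pi * t) ^ (-(d : ℝ) / 2) with hc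
  have hcpos : 0 < c := by
    have := Real.pi_pos
    exact Real.rpow_pos_of_pos (by positivity) _
  -- integrability of basic integrands
  have hKcont : Continuous (heatKernel d t) := heatKernel_continuous ht
  have hint0 : ∀ x' : EuclideanSpace ℝ (Fin d), Integrable (fun y => heatKernel d t (x' - y)) μ := by
    intro x'
    refine (integrable_const c).mono' ?_ ?_
    · exact (hKcont.comp (continuous_const.sub continuous_id)).aestronglyMeasurable
    · refine ae_of_all _ fun y => ?_
      rw [Real.norm_eq_abs, abs_of_pos (heatKernel_pos ht _)]
      exact heatKernel_le ht _
  have hint1 : Integrable (fun y => heatKernel d t (x - y) • y) μ := by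
    refine (integrable_const (c * max 1 (4 * t) + c * ‖x‖)).mono' ?_ ?_
    · exact ((hKcont.comp (continuous_const.sub continuous_id)).smul continuous_id).aestronglyMeasurable
    · refine ae_of_all _ fun y => ?_
      have hK := heatKernel_pos ht (x - y)
      have h1 : ‖heatKernel d t (x - y) • y‖ = heatKernel d t (x - y) * ‖y‖ := by
        rw [norm_smul, Real.norm_eq_abs, abs_of_pos hK]
      rw [h1]
      have h2 : ‖y‖ ≤ ‖x - y‖ + ‖x‖ := by
        calc ‖y‖ = ‖x - (x - y)‖ := by rw [sub_sub_cancel]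
          _ ≤ ‖x‖ + ‖x - y‖ := norm_sub_le _ _
          _ = ‖x - y‖ + ‖x‖ := by ring
      calc heatKernel d t (x - y) * ‖y‖ ≤ heatKernel d t (x - y) * (‖x - y‖ + ‖x‖) :=
            mul_le_mul_of_nonneg_left h2 hK.le
        _ = heatKernel d t (x - y) * ‖x - y‖ + heatKernel d t (x - y) * ‖x‖ := by ring
        _ ≤ c * max 1 (4 * t) + c * ‖x‖ := by
            have := heatKernel_mul_norm_le ht (x - y)
            have h3 : heatKernel d t (x - y) * ‖x‖ ≤ c * ‖x‖ :=
              mul_le_mul_of_nonneg_right (heatKernel_le ht _) (norm_nonneg _)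
            linarith
  -- positivity
  have hupos : 0 < heatEvolution μ x t := by
    rw [heatEvolution,
      integral_pos_iff_support_of_nonneg (fun y => (heatKernel_pos ht _).le) (hint0 x)]
    have hsupp : (Function.support fun y => heatKernel d t (x - y)) = Set.univ :=
      Set.eq_univ_of_forall fun y => (heatKernel_pos ht _).ne'
    rw [hsupp]
    simp
  refine ⟨hupos, ?_⟩
  -- the derivative CLMs
  set F' : EuclideanSpace ℝ (Fin d) → EuclideanSpace ℝ (Fin d) → (EuclideanSpace ℝ (Fin d) →L[ℝ] ℝ) :=
    fun x' y => (-((2 * t)⁻¹ * heatKernel d t (x' - y))) • innerSL ℝ (x' - y) with hF'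
  set B : ℝ := (2 * t)⁻¹ * (c * max 1 (4 * t)) with hB
  have hF'norm : ∀ (x' y : EuclideanSpace ℝ (Fin d)), ‖F' x' y‖ ≤ B := by
    intro x' y
    have hK := heatKernel_pos ht (x' - y)
    simp only [hF', hB]
    calc ‖-((2 * t)⁻¹ * heatKernel d t (x' - y)) • innerSL ℝ (x' - y)‖
        ≤ ‖-((2 * t)⁻¹ * heatKernel d t (x' - y))‖ * ‖innerSL ℝ (x' - y)‖ :=
          ContinuousLinearMap.opNorm_smul_le _ _
      _ = (2 * t)⁻¹ * (heatKernel d t (x' - y) * ‖x' - y‖) := by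
          rw [innerSL_apply_norm, Real.norm_eq_abs, abs_neg,
            abs_of_pos (mul_pos (by positivity) hK), mul_assoc]
      _ ≤ (2 * t)⁻¹ * (c * max 1 (4 * t)) :=
          mul_le_mul_of_nonneg_left (heatKernel_mul_norm_le ht _) (by positivity)
  have hderiv : HasFDerivAt (fun x' => heatEvolution μ x' t) (∫ y, F' x y ∂μ) x := by
    unfold heatEvolution
    apply hasFDerivAt_integral_of_dominated_of_fderiv_le (s := Metric.ball x 1) (Metric.ball_mem_nhds x one_pos)
      (bound := fun _ => B)
    · exact Eventually.of_forall fun x' =>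
        (hKcont.comp (continuous_const.sub continuous_id)).aestronglyMeasurable
    · exact hint0 x
    · apply Continuous.aestronglyMeasurable
      rw [hF']
      exact (((continuous_const.mul (hKcont.comp (continuous_const.sub continuous_id))).neg).smul
        ((innerSL ℝ).continuous.comp (continuous_const.sub continuous_id)))
    · exact ae_of_all _ fun y x' _ => hF'norm x' y
    · exact integrable_const B
    · exact ae_of_all _ fun y x' _ => heatKernel_hasFDerivAt ht y x'
  -- rewrite the derivative as innerSL of a vector
  set g : EuclideanSpace ℝ (Fin d) → EuclideanSpace ℝ (Fin d) := fun y => (-((2 * t)⁻¹ * heatKernel d t (x - y))) • (x - y) with hg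
  have hgint : Integrable g μ := by
    refine (integrable_const B).mono' ?_ ?_
    · rw [hg]
      exact ((continuous_const.mul (hKcont.comp (continuous_const.sub continuous_id))).neg.smul
        (continuous_const.sub continuous_id)).aestronglyMeasurable
    · refine ae_of_all _ fun y => ?_
      have hK := heatKernel_pos ht (x - y)
      simp only [hg, hB]
      calc ‖-((2 * t)⁻¹ * heatKernel d t (x - y)) • (x - y)‖
          = ‖-((2 * t)⁻¹ * heatKernel d t (x - y))‖ * ‖x - y‖ := norm_smul _ _
        _ = (2 * t)⁻¹ * (heatKernel d t (x - y) * ‖x - y‖) := by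
            rw [Real.norm_eq_abs, abs_neg,
              abs_of_pos (mul_pos (by positivity) hK), mul_assoc]
        _ ≤ (2 * t)⁻¹ * (c * max 1 (4 * t)) :=
            mul_le_mul_of_nonneg_left (heatKernel_mul_norm_le ht _) (by positivity)
  have hkey : (∫ y, F' x y ∂μ) = innerSL ℝ (∫ y, g y ∂μ) := by
    have h1 : ∀ y, F' x y = innerSL ℝ (g y) := by
      intro y
      simp only [hF', hg, _root_.map_smul]
    rw [integral_congr_ae (ae_of_all _ h1), ContinuousLinearMap.integral_comp_comm _ hgint]
  rw [hkey] at hderiv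
  -- take log
  have hlog := hderiv.log hupos.ne'
  -- identify with gradient
  rw [hasGradientAt_iff_hasFDerivAt]
  have hvec : (2 * t)⁻¹ • (tiltedBarycenter μ x t - x) =
      (heatEvolution μ x t)⁻¹ • ∫ y, g y ∂μ := by
    have hgsplit : (∫ y, g y ∂μ) = (2 * t)⁻¹ • (∫ y, heatKernel d t (x - y) • y ∂μ)
        - ((2 * t)⁻¹ * heatEvolution μ x t) • x := by
      have h1 : ∀ y, g y = (2 * t)⁻¹ • (heatKernel d t (x - y) • y)
          - ((2 * t)⁻¹ * heatKernel d t (x - y)) • x := by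
        intro y; simp only [hg]; module
      have hA : Integrable (fun y => (2 * t)⁻¹ • (heatKernel d t (x - y) • y)) μ :=
        hint1.smul ((2 * t)⁻¹)
      have hB2 : Integrable (fun y => ((2 * t)⁻¹ * heatKernel d t (x - y)) • x) μ :=
        ((hint0 x).const_mul _).smul_const x
      rw [integral_congr_ae (ae_of_all _ h1), integral_sub hA hB2, integral_smul,
        integral_smul_const, integral_const_mul, heatEvolution]
    rw [hgsplit, tiltedBarycenter]
    have hune : heatEvolution μ x t ≠ 0 := hupos.ne'
    match_scalars <;> (field_simp; try ring)
  rw [hvec]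
  refine hlog.congr_fderiv ?_
  ext w
  simp [InnerProductSpace.toDual_apply_apply, real_inner_smul_left]
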